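/- Let f : ℝ^d → ℝ≥0 be an arbitrary function such that for every b ∈ ℤ≥0 there is a constant K_b with f(a) ≤ K_b·(1+‖a‖)^{-b} for all a ∈ ℝ^d. Then there exists a smooth Schwartz function ν : ℝ^d → ℝ with ν(a) > 0 for all a and f(a) ≤ ν(a) for all a ∈ ℝ^d. -/

import Mathlib

open scoped NNReal
open scoped Nat RealInnerProductSpace ContDiff

set_option maxHeartbeats 1000000
set_option synthInstance.maxHeartbeats 200000

lemma aux_exp_bound (M : ℕ) {r : ℝ} (hr : 0 ≤ r) :
    (1 + r) ^ M * Real.exp (-(r ^ 2)) ≤ 2 ^ M * (2 + M !) := by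
  have hexp : Real.exp (-(r ^ 2)) ≤ 1 := Real.exp_le_one_iff.mpr (by nlinarith [sq_nonneg r])
  have hexp0 : 0 < Real.exp (-(r ^ 2)) := Real.exp_pos _
  have h1 : (1 + r) ^ M ≤ 2 ^ M * (1 + r ^ (2 * M)) := by
    rcases le_total r 1 with h | h
    · calc (1 + r) ^ M ≤ 2 ^ M := pow_le_pow_left₀ (by positivity) (by linarith) M
        _ ≤ 2 ^ M * (1 + r ^ (2 * M)) := by
            have := pow_nonneg hr (2 * M)
            nlinarith [pow_pos (show (0:ℝ) < 2 by norm_num) M]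
    · calc (1 + r) ^ M ≤ (2 * r) ^ M := pow_le_pow_left₀ (by positivity) (by linarith) M
        _ = 2 ^ M * r ^ M := mul_pow 2 r M
        _ ≤ 2 ^ M * (1 + r ^ (2 * M)) := by
            have h2 : r ^ M ≤ r ^ (2 * M) := pow_le_pow_right₀ h (by omega)
            have := pow_pos (show (0:ℝ) < 2 by norm_num) M
            nlinarith
  have h2 : (1 + r ^ (2 * M)) * Real.exp (-(r ^ 2)) ≤ 2 + M ! := by
    have key : (r ^ 2) ^ M / M ! ≤ Real.exp (r ^ 2) :=
      Real.pow_div_factorial_le_exp (x := r ^ 2) (by positivity) M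
    have hM : (0:ℝ) < M ! := by exact_mod_cast Nat.factorial_pos M
    have : r ^ (2 * M) * Real.exp (-(r ^ 2)) ≤ M ! := by
      rw [Real.exp_neg]
      rw [pow_mul]
      calc (r ^ 2) ^ M * (Real.exp (r ^ 2))⁻¹ ≤ (M ! * Real.exp (r ^ 2)) * (Real.exp (r ^ 2))⁻¹ := by
            gcongr
            rw [div_le_iff₀ hM] at key; linarith [key]
        _ =M ! := by field_simp
    calc (1 + r ^ (2 * M)) * Real.exp (-(r ^ 2))
        = Real.exp (-(r ^ 2)) + r ^ (2 * M) * Real.exp (-(r ^ 2)) := by ring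
      _ ≤ 1 + M ! := by gcongr
      _ ≤ 2 + M ! := by linarith
  calc (1 + r) ^ M * Real.exp (-(r ^ 2)) ≤ (2 ^ M * (1 + r ^ (2 * M))) * Real.exp (-(r ^ 2)) := by
        gcongr
    _ = 2 ^ M * ((1 + r ^ (2 * M)) * Real.exp (-(r ^ 2))) := by ring
    _ ≤ 2 ^ M * (2 + (M ! : ℝ)) := by
        have h2M : (0:ℝ) ≤ 2 ^ M := by positivity
        exact mul_le_mul_of_nonneg_left h2 h2M

lemma aux_exp_bound_scaled (M n : ℕ) {r : ℝ} (hr : 0 ≤ r) :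
    (1 + r) ^ M * Real.exp (-((4:ℝ)⁻¹ ^ n * r ^ 2)) ≤ 2 ^ (n * M) * (2 ^ M * (2 + M !)) := by
  set t := r / 2 ^ n with ht
  have h2n : (0:ℝ) < 2 ^ n := by positivity
  have ht0 : 0 ≤ t := by positivity
  have hrt : r = 2 ^ n * t := by rw [ht]; field_simp
  have harg : (4:ℝ)⁻¹ ^ n * r ^ 2 = t ^ 2 := by
    have h4 : ((2:ℝ) ^ n) ^ 2 = 4 ^ n := by
      rw [← pow_mul, pow_mul']; norm_num
    rw [ht, div_pow, h4, inv_pow]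
    field_simp
  have h1r : 1 + r ≤ 2 ^ n * (1 + t) := by
    rw [hrt]; have : (1:ℝ) ≤ 2 ^ n := one_le_pow₀ (by norm_num)
    nlinarith
  calc (1 + r) ^ M * Real.exp (-((4:ℝ)⁻¹ ^ n * r ^ 2))
      ≤ (2 ^ n * (1 + t)) ^ M * Real.exp (-(t ^ 2)) := by
        rw [harg]
        exact mul_le_mul (pow_le_pow_left₀ (by positivity) h1r M) le_rfl
          (le_of_lt (Real.exp_pos _)) (by positivity)
    _ = 2 ^ (n * M) * ((1 + t) ^ M * Real.exp (-(t ^ 2))) := by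
        rw [mul_pow, ← pow_mul]; ring
    _ ≤ 2 ^ (n * M) * (2 ^ M * (2 + M !)) := by
        have := aux_exp_bound M ht0
        have h2nM : (0:ℝ) ≤ 2 ^ (n * M) := by positivity
        exact mul_le_mul_of_nonneg_left this h2nM

section GaussAux
variable {E : Type*} [NormedAddCommGroup E] [InnerProductSpace ℝ E]

lemma gauss_deriv_bound {δ : ℝ} (hδ0 : 0 < δ) (hδ1 : δ ≤ 1) (m : ℕ) (x : E) :
    ‖iteratedFDeriv ℝ m (fun y : E => Real.exp (-(δ * ⟪y, y⟫))) x‖ ≤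
      m ! * Real.exp (-(δ * ⟪x, x⟫)) * (2 * (1 + ‖x‖)) ^ m := by
  set gδ : E → ℝ := fun y => -(δ * ⟪y, y⟫) with hgδ
  set A : E →L[ℝ] E →L[ℝ] ℝ := (-(2 * δ)) • (innerSL ℝ) with hA
  have hg_smooth : ContDiff ℝ ∞ gδ :=
    ((contDiff_const.mul (contDiff_id.inner ℝ contDiff_id)).neg)
  have hfd : ∀ y : E, HasFDerivAt gδ (A y) y := by
    intro y
    have h := ((hasFDerivAt_id y).inner ℝ (hasFDerivAt_id y)).const_mul δ |>.neg
    refine h.congr_fderiv ?_ |>.congr_of_eventuallyEq (Filter.Eventually.of_forall fun z => by simp [hgδ])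
    ext z
    simp [hA, fderivInnerCLM_apply, real_inner_comm]
    rw [innerSL_apply_apply]
    ring
  have hfderiv : fderiv ℝ gδ = fun y => A y := funext fun y => (hfd y).fderiv
  have hAnorm : ‖A‖ ≤ 2 * δ := by
    rw [hA]
    refine le_trans (ContinuousLinearMap.opNorm_smul_le _ _) ?_
    calc ‖-(2*δ)‖ * ‖(innerSL ℝ : E →L⋆[ℝ] E →L[ℝ] ℝ)‖
        = (2*δ) * ‖(innerSL ℝ : E →L⋆[ℝ] E →L[ℝ] ℝ)‖ := by
          rw [norm_neg, Real.norm_eq_abs, abs_of_pos (by positivity)]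
      _ ≤ (2*δ) * 1 := mul_le_mul_of_nonneg_left (norm_innerSL_le ℝ) (by positivity)
      _ = 2 * δ := by ring
  have hD : ∀ i, 1 ≤ i → i ≤ m → ‖iteratedFDeriv ℝ i gδ x‖ ≤ (2 * (1 + ‖x‖)) ^ i := by
    intro i hi1 him
    obtain ⟨j, rfl⟩ : ∃ j, i = j + 1 := ⟨i - 1, by omega⟩
    rw [← norm_iteratedFDeriv_fderiv, hfderiv]
    match j with
    | 0 =>
      rw [norm_iteratedFDeriv_zero]
      calc ‖A x‖ ≤ ‖A‖ * ‖x‖ := A.le_opNorm x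
        _ ≤ (2 * 1) * (1 + ‖x‖) := by
            apply mul_le_mul (le_trans hAnorm (by linarith)) (by linarith) (norm_nonneg _)
              (by norm_num)
        _ ≤ (2 * (1 + ‖x‖)) ^ 1 := by
            have := norm_nonneg x; rw [pow_one]; nlinarith
    | 1 =>
      have : ‖iteratedFDeriv ℝ 1 (⇑A) x‖ = ‖fderiv ℝ (⇑A) x‖ := by
        rw [← norm_iteratedFDeriv_fderiv, norm_iteratedFDeriv_zero]
      rw [this, A.fderiv]
      calc ‖A‖ ≤ 2 * δ := hAnorm
        _ ≤ (2 * (1 + ‖x‖)) ^ 2 := by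
            have := norm_nonneg x; nlinarith
    | (k + 2) =>
      have h2 : fderiv ℝ (⇑A) = fun _ : E => A := funext fun y => A.fderiv
      have h3 : ‖iteratedFDeriv ℝ (k + 2) (⇑A) x‖ = 0 := by
        rw [← norm_iteratedFDeriv_fderiv, h2,
          iteratedFDeriv_const_of_ne (by omega : k + 1 ≠ 0)]
        simp
      rw [h3]
      positivity
  have hC : ∀ i, i ≤ m → ‖iteratedFDeriv ℝ i Real.exp (gδ x)‖ ≤ Real.exp (gδ x) := by
    intro i _
    rw [norm_iteratedFDeriv_eq_norm_iteratedDeriv, iteratedDeriv_eq_iterate, Real.iter_deriv_exp]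
    simp [Real.norm_eq_abs, abs_of_pos (Real.exp_pos _)]
  have key := norm_iteratedFDeriv_comp_le (g := Real.exp) (f := gδ) (n := m) (N := (m : ℕ∞))
    Real.contDiff_exp (hg_smooth.of_le (by exact_mod_cast le_top)) le_rfl x hC hD
  exact key

end GaussAux

/-- Any rapidly decaying nonnegative function is dominated by a strictly
positive Schwartz function. -/
theorem regularizing_decay_bounds (d : ℕ)
    (f : EuclideanSpace ℝ (Fin d) → ℝ≥0)
    (hf : ∀ b : ℕ, ∃ K : ℝ, ∀ a, (f a : ℝ) ≤ K * (1 + ‖a‖) ^ (-(b : ℝ))) :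
    ∃ ν : SchwartzMap (EuclideanSpace ℝ (Fin d)) ℝ,
      (∀ a, 0 < ν a) ∧ ∀ a, (f a : ℝ) ≤ ν a := by
  have hK' : ∀ b : ℕ, ∃ K : ℝ, 1 ≤ K ∧ ∀ a : EuclideanSpace ℝ (Fin d), (f a : ℝ) ≤ K * (1 + ‖a‖) ^ (-(b : ℝ)) := by
    intro b
    obtain ⟨K, hK⟩ := hf b
    refine ⟨max K 1, le_max_right _ _, fun a => (hK a).trans ?_⟩
    have hrp : (0:ℝ) ≤ (1 + ‖a‖) ^ (-(b : ℝ)) :=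
      Real.rpow_nonneg (by positivity) _
    exact mul_le_mul_of_nonneg_right (le_max_left _ _) hrp
  choose K hK1 hKf using hK'
  have hK0 : ∀ b, (0:ℝ) ≤ K b := fun b => le_trans zero_le_one (hK1 b)
  set s : ℕ → ℝ := fun n => ⨅ b : ℕ, K b / 2 ^ (n * b) with hs_def
  have hs_bdd : ∀ n, BddBelow (Set.range fun b : ℕ => K b / 2 ^ (n * b)) := by
    intro n
    refine ⟨0, ?_⟩
    rintro y ⟨b, rfl⟩
    have := hK0 b
    positivity
  have hs_nonneg : ∀ n, 0 ≤ s n := by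
    intro n
    refine le_ciInf fun b => ?_
    have := hK0 b
    positivity
  have hs_le : ∀ n b, s n ≤ K b / 2 ^ (n * b) := fun n b => ciInf_le (hs_bdd n) b
  set c : ℕ → ℝ := fun n => Real.exp 16 * s n + (if n = 0 then 1 else 0) with hc_def
  have hc_nonneg : ∀ n, 0 ≤ c n := by
    intro n
    have h1 : (0:ℝ) ≤ Real.exp 16 * s n := by
      have := hs_nonneg n; positivity
    have h2 : (0:ℝ) ≤ (if n = 0 then (1:ℝ) else 0) := by positivity
    simp only [hc_def]; linarith
  have hc_ge : ∀ n, Real.exp 16 * s n ≤ c n := by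
    intro n
    have h2 : (0:ℝ) ≤ (if n = 0 then (1:ℝ) else 0) := by positivity
    simp only [hc_def]; linarith
  have hc0 : 1 ≤ c 0 := by
    have h1 : (0:ℝ) ≤ Real.exp 16 * s 0 := by
      have := hs_nonneg 0; positivity
    simp only [hc_def]; norm_num; linarith
  -- summability of the weighted series
  have hsum : ∀ j : ℕ, Summable (fun n => c n * 2 ^ (n * j)) := by
    intro j
    have hgeo : Summable (fun n : ℕ => Real.exp 16 * K (j + 2) * (1/2 : ℝ) ^ n) :=
      (summable_geometric_of_lt_one (by norm_num) (by norm_num)).mul_left _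
    have hind : Summable (fun n : ℕ => if n = 0 then (1:ℝ) else 0) := by
      apply summable_of_ne_finset_zero (s := {0})
      intro n hn
      simp only [Finset.mem_singleton] at hn
      exact if_neg hn
    refine Summable.of_nonneg_of_le (fun n => ?_) (fun n => ?_) (hgeo.add hind)
    · have := hc_nonneg n; positivity
    · have hsle : s n * 2 ^ (n * j) ≤ K (j + 2) * (1/2 : ℝ) ^ n := by
        calc s n * 2 ^ (n * j) ≤ (K (j + 2) / 2 ^ (n * (j + 2))) * 2 ^ (n * j) := by
              have := hs_le n (j + 2)
              gcongr
          _ = K (j + 2) * ((2:ℝ) ^ (n * j) / 2 ^ (n * (j + 2))) := by ring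
          _ ≤ K (j + 2) * (1/2 : ℝ) ^ n := by
              have hq : (2:ℝ) ^ (n * j) / 2 ^ (n * (j + 2)) ≤ (1/2 : ℝ) ^ n := by
                rw [show n * (j + 2) = n * j + 2 * n by ring, pow_add, div_mul_eq_div_div,
                  div_self (ne_of_gt (by positivity : (0:ℝ) < 2 ^ (n * j)))]
                rw [div_pow, one_pow]
                apply one_div_le_one_div_of_le (by positivity)
                exact pow_le_pow_right₀ one_le_two (by omega)
              exact mul_le_mul_of_nonneg_left hq (hK0 _)
      have h2nj : (if n = 0 then (1:ℝ) else 0) * 2 ^ (n * j) = (if n = 0 then (1:ℝ) else 0) := by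
        rcases eq_or_ne n 0 with rfl | hn
        · simp
        · simp [hn]
      calc c n * 2 ^ (n * j)
          = Real.exp 16 * (s n * 2 ^ (n * j)) + (if n = 0 then (1:ℝ) else 0) * 2 ^ (n * j) := by
            simp only [hc_def]; ring
        _ ≤ Real.exp 16 * (K (j + 2) * (1/2 : ℝ) ^ n) + (if n = 0 then (1:ℝ) else 0) := by
            rw [h2nj]
            have := Real.exp_pos (16:ℝ)
            gcongr
        _ = Real.exp 16 * K (j + 2) * (1/2 : ℝ) ^ n + (if n = 0 then (1:ℝ) else 0) := by ring
  -- the family of scaled Gaussians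
  set G : ℕ → EuclideanSpace ℝ (Fin d) → ℝ :=
    fun n x => Real.exp (-((4:ℝ)⁻¹ ^ n * ⟪x, x⟫)) with hG_def
  set F : ℕ → EuclideanSpace ℝ (Fin d) → ℝ := fun n x => c n * G n x with hF_def
  have hδ0 : ∀ n : ℕ, (0:ℝ) < 4⁻¹ ^ n := fun n => by positivity
  have hδ1 : ∀ n : ℕ, ((4:ℝ)⁻¹) ^ n ≤ 1 := fun n => pow_le_one₀ (by norm_num) (by norm_num)
  have hGsmooth : ∀ n, ContDiff ℝ ∞ (G n) := by
    intro n
    exact ((contDiff_const.mul (contDiff_id.inner ℝ contDiff_id)).neg).exp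
  have hFsmooth : ∀ n, ContDiff ℝ ∞ (F n) := fun n => contDiff_const.mul (hGsmooth n)
  have hpoint : ∀ (k m n : ℕ) (x : EuclideanSpace ℝ (Fin d)),
      ‖x‖ ^ k * ‖iteratedFDeriv ℝ m (F n) x‖ ≤
        c n * 2 ^ (n * (k + m)) * ((m ! : ℝ) * 2 ^ m * (2 ^ (k + m) * (2 + (k + m)!))) := by
    intro k m n x
    have hFsmul : F n = c n • G n := by
      funext y; simp [hF_def, smul_eq_mul]
    have hD : ‖iteratedFDeriv ℝ m (F n) x‖ = c n * ‖iteratedFDeriv ℝ m (G n) x‖ := by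
      rw [hFsmul, iteratedFDeriv_const_smul_apply ((hGsmooth n).contDiffAt.of_le (show ((m : ℕ) : WithTop ℕ∞) ≤ ∞ by exact_mod_cast le_top)), norm_smul,
        Real.norm_eq_abs, abs_of_nonneg (hc_nonneg n)]
    have hg := gauss_deriv_bound (hδ0 n) (hδ1 n) m x
    have hinn : ⟪x, x⟫ = ‖x‖ ^ 2 := real_inner_self_eq_norm_sq x
    calc ‖x‖ ^ k * ‖iteratedFDeriv ℝ m (F n) x‖
        = c n * (‖x‖ ^ k * ‖iteratedFDeriv ℝ m (G n) x‖) := by rw [hD]; ring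
      _ ≤ c n * ((1 + ‖x‖) ^ k *
            ((m ! : ℝ) * Real.exp (-((4:ℝ)⁻¹ ^ n * ⟪x, x⟫)) * (2 * (1 + ‖x‖)) ^ m)) := by
          apply mul_le_mul_of_nonneg_left _ (hc_nonneg n)
          apply mul_le_mul _ hg (norm_nonneg _) (by positivity)
          exact pow_le_pow_left₀ (norm_nonneg x) (by linarith [norm_nonneg x]) k
      _ = ((m ! : ℝ) * 2 ^ m) *
            (c n * ((1 + ‖x‖) ^ (k + m) * Real.exp (-((4:ℝ)⁻¹ ^ n * ‖x‖ ^ 2)))) := by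
          rw [hinn, mul_pow, pow_add]; ring
      _ ≤ ((m ! : ℝ) * 2 ^ m) *
            (c n * (2 ^ (n * (k + m)) * (2 ^ (k + m) * (2 + (k + m)!)))) := by
          have haux := aux_exp_bound_scaled (k + m) n (norm_nonneg x)
          have h0 : (0:ℝ) ≤ (m ! : ℝ) * 2 ^ m := by positivity
          exact mul_le_mul_of_nonneg_left
            (mul_le_mul_of_nonneg_left haux (hc_nonneg n)) h0
      _ = c n * 2 ^ (n * (k + m)) * ((m ! : ℝ) * 2 ^ m * (2 ^ (k + m) * (2 + (k + m)!))) := by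
          ring
  set v : ℕ → ℕ → ℝ := fun m n =>
    c n * 2 ^ (n * m) * ((m ! : ℝ) * 2 ^ m * (2 ^ m * (2 + (m !)))) with hv_def
  have hvbound : ∀ (m n : ℕ) (x : EuclideanSpace ℝ (Fin d)),
      ‖iteratedFDeriv ℝ m (F n) x‖ ≤ v m n := by
    intro m n x
    have h := hpoint 0 m n x
    simpa [hv_def] using h
  have hvsum : ∀ m, Summable (v m) := fun m => (hsum m).mul_right _
  have hcont : ContDiff ℝ ∞ (fun x : EuclideanSpace ℝ (Fin d) => ∑' n, F n x) := by
    exact contDiff_tsum (N := (⊤ : ℕ∞)) (fun n => hFsmooth n) (fun k _ => hvsum k)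
      (fun k i x _ => hvbound k i x)
  have hderiv_tsum : ∀ (m : ℕ) (x : EuclideanSpace ℝ (Fin d)),
      iteratedFDeriv ℝ m (fun y => ∑' n, F n y) x = ∑' n, iteratedFDeriv ℝ m (F n) x := by
    intro m x
    exact iteratedFDeriv_tsum_apply (N := (⊤ : ℕ∞)) (fun n => hFsmooth n)
      (fun k _ => hvsum k) (fun k i y _ => hvbound k i y) le_top x
  have hdecay : ∀ k m : ℕ, ∃ C : ℝ, ∀ x : EuclideanSpace ℝ (Fin d), ‖x‖ ^ k *
      ‖iteratedFDeriv ℝ m (fun y => ∑' n, F n y) x‖ ≤ C := by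
    intro k m
    refine ⟨∑' n, c n * 2 ^ (n * (k + m)) *
      ((m ! : ℝ) * 2 ^ m * (2 ^ (k + m) * (2 + (k + m)!))), fun x => ?_⟩
    have hWsum : Summable (fun n => c n * 2 ^ (n * (k + m)) *
        ((m ! : ℝ) * 2 ^ m * (2 ^ (k + m) * (2 + (k + m)!)))) :=
      (hsum (k + m)).mul_right _
    have hnorm_sum : Summable (fun n => ‖iteratedFDeriv ℝ m (F n) x‖) :=
      Summable.of_nonneg_of_le (fun n => norm_nonneg _) (fun n => hvbound m n x) (hvsum m)
    rw [hderiv_tsum m x]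
    calc ‖x‖ ^ k * ‖∑' n, iteratedFDeriv ℝ m (F n) x‖
        ≤ ‖x‖ ^ k * ∑' n, ‖iteratedFDeriv ℝ m (F n) x‖ :=
          mul_le_mul_of_nonneg_left (norm_tsum_le_tsum_norm hnorm_sum) (by positivity)
      _ = ∑' n, ‖x‖ ^ k * ‖iteratedFDeriv ℝ m (F n) x‖ := by rw [tsum_mul_left]
      _ ≤ ∑' n, c n * 2 ^ (n * (k + m)) *
            ((m ! : ℝ) * 2 ^ m * (2 ^ (k + m) * (2 + (k + m)!))) :=
          Summable.tsum_le_tsum (fun n => hpoint k m n x) (hnorm_sum.mul_left _) hWsum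
  have hFx_nonneg : ∀ (n : ℕ) (x : EuclideanSpace ℝ (Fin d)), 0 ≤ F n x := by
    intro n x
    have h := Real.exp_pos (-((4:ℝ)⁻¹ ^ n * ⟪x, x⟫))
    exact mul_nonneg (hc_nonneg n) h.le
  have hsum_x : ∀ x : EuclideanSpace ℝ (Fin d), Summable (fun n => F n x) := by
    intro x
    refine Summable.of_nonneg_of_le (fun n => hFx_nonneg n x) (fun n => ?_)
      (by simpa using hsum 0)
    have hexp1 : Real.exp (-((4:ℝ)⁻¹ ^ n * ⟪x, x⟫)) ≤ 1 := by
      apply Real.exp_le_one_iff.mpr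
      have h1 : (0:ℝ) ≤ ⟪x, x⟫ := real_inner_self_nonneg
      have h2 := (hδ0 n).le
      nlinarith
    calc F n x ≤ c n * 1 := mul_le_mul_of_nonneg_left hexp1 (hc_nonneg n)
      _ = c n := mul_one _
  refine ⟨⟨fun x => ∑' n, F n x, hcont, hdecay⟩, ?_, ?_⟩
  · intro a
    have hpos0 : 0 < F 0 a := by
      have hc0' : (0:ℝ) < c 0 := lt_of_lt_of_le one_pos hc0
      have h := Real.exp_pos (-((4:ℝ)⁻¹ ^ 0 * ⟪a, a⟫))
      exact mul_pos hc0' h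
    have hle : F 0 a ≤ ∑' n, F n a := Summable.le_tsum (hsum_x a) 0 (fun i _ => hFx_nonneg i a)
    exact lt_of_lt_of_le hpos0 hle
  · intro a
    set u : ℝ := 1 + ‖a‖ with hu_def
    have hu1 : (1:ℝ) ≤ u := by
      have := norm_nonneg a; simp only [hu_def]; linarith
    have hu0 : (0:ℝ) ≤ u := by linarith
    set m₀ : ℕ := ⌊u⌋₊ with hm0_def
    have hm0_pos : m₀ ≠ 0 := by
      have h1 : (1:ℕ) ≤ m₀ := Nat.le_floor (by exact_mod_cast hu1)
      omega
    set n : ℕ := Nat.log 2 m₀ with hn_def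
    have h2n_le : (2:ℝ) ^ n ≤ u := by
      have h1 : (2:ℕ) ^ n ≤ m₀ := Nat.pow_log_le_self 2 hm0_pos
      have h2 : (m₀ : ℝ) ≤ u := Nat.floor_le hu0
      calc ((2:ℝ))^n = ((2^n : ℕ) : ℝ) := by push_cast; ring
        _ ≤ (m₀ : ℝ) := by exact_mod_cast h1
        _ ≤ u := h2
    have hu_lt : u < (2:ℝ) ^ (n + 1) := by
      have h1 : m₀ < 2 ^ (n + 1) := Nat.lt_pow_succ_log_self (by norm_num) m₀
      have h2 : u < m₀ + 1 := Nat.lt_floor_add_one u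
      have h3 : (m₀:ℝ) + 1 ≤ ((2:ℝ)) ^ (n+1) := by
        have h4 : m₀ + 1 ≤ 2 ^ (n+1) := h1
        exact_mod_cast h4
      linarith
    have hfa : (f a : ℝ) ≤ s n := by
      refine le_ciInf fun b => ?_
      have h1 := hKf b a
      have h2 : (1 + ‖a‖ : ℝ) ^ (-(b:ℝ)) = ((1 + ‖a‖) ^ b)⁻¹ := by
        rw [← Real.rpow_natCast (1 + ‖a‖) b, ← Real.rpow_neg (by positivity)]
      have h3 : ((2:ℝ) ^ (n*b)) ≤ (1 + ‖a‖) ^ b := by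
        rw [pow_mul]
        exact pow_le_pow_left₀ (by positivity) h2n_le b
      calc (f a : ℝ) ≤ K b * (1 + ‖a‖) ^ (-(b:ℝ)) := h1
        _ = K b * ((1 + ‖a‖) ^ b)⁻¹ := by rw [h2]
        _ ≤ K b * ((2:ℝ) ^ (n*b))⁻¹ := by
            apply mul_le_mul_of_nonneg_left _ (hK0 b)
            exact inv_anti₀ (by positivity) h3
        _ = K b / 2 ^ (n * b) := by rw [div_eq_mul_inv]
    have hterm : s n ≤ F n a := by
      have hinn : ⟪a, a⟫ = ‖a‖ ^ 2 := real_inner_self_eq_norm_sq a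
      have hexp : Real.exp (-(16:ℝ)) ≤ Real.exp (-((4:ℝ)⁻¹ ^ n * ⟪a, a⟫)) := by
        apply Real.exp_le_exp.mpr
        have hna : ‖a‖ ≤ u := by simp only [hu_def]; linarith
        have h1 : ‖a‖ ^ 2 ≤ ((2:ℝ) ^ (n+1)) ^ 2 := by
          apply pow_le_pow_left₀ (norm_nonneg a); linarith
        have h2 : (4:ℝ)⁻¹ ^ n * ((2:ℝ)^(n+1))^2 = 4 := by
          rw [show ((2:ℝ)^(n+1))^2 = 4^(n+1) by rw [← pow_mul, pow_mul']; norm_num,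
            pow_succ, inv_pow]
          field_simp
        have h3 : (4:ℝ)⁻¹ ^ n * ⟪a, a⟫ ≤ 16 := by
          calc (4:ℝ)⁻¹ ^ n * ⟪a, a⟫ ≤ (4:ℝ)⁻¹ ^ n * ((2:ℝ)^(n+1))^2 := by
                rw [hinn]
                exact mul_le_mul_of_nonneg_left h1 (hδ0 n).le
            _ = 4 := h2
            _ ≤ 16 := by norm_num
        linarith
      calc s n = Real.exp 16 * s n * Real.exp (-16) := by
            rw [mul_comm (Real.exp 16) (s n), mul_assoc, ← Real.exp_add]; norm_num
        _ ≤ c n * Real.exp (-((4:ℝ)⁻¹ ^ n * ⟪a, a⟫)) :=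
            mul_le_mul (hc_ge n) hexp (Real.exp_pos _).le (hc_nonneg n)
        _ = F n a := rfl
    have hle : F n a ≤ ∑' i, F i a := Summable.le_tsum (hsum_x a) n (fun i _ => hFx_nonneg i a)
    exact le_trans hfa (le_trans hterm hle)
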